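/- (Lower parameter bound) Assume p ≠ q and for some integer r with 0 ≤ r ≤ min{p,q}: −τ ≤ r·ℓ + α(2pq/(p+q) − r), where τ = (2pq/(p+q))(μV − μW). Then: if μV − μW > −ℓ, α ≥ −(2·max{p,q}/|q−p|)(μV − μW) − ((p+q)/|q−p|)·ℓ; and if μV − μW ≤ −ℓ, α ≥ −(μV − μW). -/

import Mathlib

lemma aux_lpb (a b : ℝ) (ha : 0 < a) (hab : a < b) (δ α ℓ : ℝ) (hℓ : 0 < ℓ)
    (r : ℝ) (hr0 : 0 ≤ r) (hrm : r ≤ a)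
    (h : -(2*a*b*δ) ≤ r*ℓ*(a+b) + α*(2*a*b - r*(a+b))) :
    (δ > -ℓ → α ≥ -(2*b/(b-a))*δ - ((a+b)/(b-a))*ℓ) ∧ (δ ≤ -ℓ → α ≥ -δ) := by
  have hb : 0 < b := lt_trans ha hab
  have hS : 0 < a + b := by linarith
  have hD : 0 < b - a := by linarith
  have hmr : 0 < 2*a*b - r*(a+b) := by
    nlinarith [mul_pos ha hD, mul_le_mul_of_nonneg_right hrm hS.le]
  constructor
  · intro hδ
    have e : -(2*b/(b-a))*δ - ((a+b)/(b-a))*ℓ = (-(2*b*δ) - (a+b)*ℓ)/(b-a) := by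
      field_simp
    rw [ge_iff_le, e, div_le_iff₀ hD]
    have hstep : (-(2*b*δ) - (a+b)*ℓ) * (2*a*b - r*(a+b)) ≤ (α*(b-a)) * (2*a*b - r*(a+b)) := by
      nlinarith [mul_le_mul_of_nonneg_right h hD.le,
        mul_nonneg (mul_nonneg (mul_nonneg (by linarith : (0:ℝ) ≤ 2*b) hS.le)
          (by linarith : (0:ℝ) ≤ a - r)) (by linarith : (0:ℝ) ≤ δ + ℓ)]
    exact (mul_le_mul_iff_left₀ hmr).mp hstep
  · intro hδ
    have hstep : (-δ) * (2*a*b - r*(a+b)) ≤ α * (2*a*b - r*(a+b)) := by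
      nlinarith [mul_nonneg (mul_nonneg hr0 hS.le) (by linarith : (0:ℝ) ≤ -(ℓ+δ))]
    exact (mul_le_mul_iff_left₀ hmr).mp hstep

theorem lower_parameter_bound (p q : ℕ) (hp : 0 < p) (hq : 0 < q) (hpq : p ≠ q)
    (μV μW α ℓ : ℝ) (hℓ : 0 < ℓ) (r : ℤ)
    (hr0 : 0 ≤ r) (hrm : r ≤ (min p q : ℕ))
    (h : -((2 * (p : ℝ) * q / (p + q)) * (μV - μW))
          ≤ (r : ℝ) * ℓ + α * (2 * (p : ℝ) * q / (p + q) - (r : ℝ))) :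
    (μV - μW > -ℓ →
      α ≥ -(2 * ((max p q : ℕ) : ℝ) / |(q : ℝ) - p|) * (μV - μW)
            - (((p : ℝ) + q) / |(q : ℝ) - p|) * ℓ)
    ∧ (μV - μW ≤ -ℓ → α ≥ -(μV - μW)) := by
  have ha : (0:ℝ) < p := by exact_mod_cast hp
  have hb : (0:ℝ) < q := by exact_mod_cast hq
  have hS : (0:ℝ) < (p:ℝ) + q := by linarith
  have hrR : (0:ℝ) ≤ (r:ℝ) := by exact_mod_cast hr0
  have hrm' : (r:ℝ) ≤ min (p:ℝ) (q:ℝ) := by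
    have : (r:ℝ) ≤ ((min p q : ℕ) : ℝ) := by exact_mod_cast hrm
    simpa [Nat.cast_min] using this
  have h' : -(2*(p:ℝ)*q*(μV-μW)) ≤ (r:ℝ)*ℓ*((p:ℝ)+q) + α*(2*(p:ℝ)*q - (r:ℝ)*((p:ℝ)+q)) := by
    have h2 := mul_le_mul_of_nonneg_right h hS.le
    have e1 : -((2 * (p : ℝ) * q / ((p:ℝ) + q)) * (μV - μW)) * ((p:ℝ)+q)
        = -(2*(p:ℝ)*q*(μV-μW)) := by field_simp
    have e2 : ((r : ℝ) * ℓ + α * (2 * (p : ℝ) * q / ((p:ℝ) + q) - (r : ℝ))) * ((p:ℝ)+q)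
        = (r:ℝ)*ℓ*((p:ℝ)+q) + α*(2*(p:ℝ)*q - (r:ℝ)*((p:ℝ)+q)) := by
      have e0 : (2*(p:ℝ)*q/((p:ℝ)+q))*((p:ℝ)+q) = 2*(p:ℝ)*q := div_mul_cancel₀ _ hS.ne'
      linear_combination α * e0
    rw [e1, e2] at h2
    exact h2
  rcases lt_or_gt_of_ne hpq with hlt | hlt
  · have hab : (p:ℝ) < q := by exact_mod_cast hlt
    have hmin : min (p:ℝ) (q:ℝ) = (p:ℝ) := min_eq_left hab.le
    have hmax : ((max p q : ℕ) : ℝ) = (q:ℝ) := by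
      rw [max_eq_right hlt.le]
    have habs : |(q:ℝ) - p| = (q:ℝ) - p := abs_of_pos (by linarith)
    have := aux_lpb (p:ℝ) (q:ℝ) ha hab (μV-μW) α ℓ hℓ (r:ℝ) hrR (hmin ▸ hrm') h'
    rw [hmax, habs]
    exact this
  · have hab : (q:ℝ) < p := by exact_mod_cast hlt
    have hmin : min (p:ℝ) (q:ℝ) = (q:ℝ) := min_eq_right hab.le
    have hmax : ((max p q : ℕ) : ℝ) = (p:ℝ) := by
      rw [max_eq_left hlt.le]
    have habs : |(q:ℝ) - p| = (p:ℝ) - q := by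
      rw [abs_of_neg (by linarith : (q:ℝ) - p < 0)]; ring
    have h'' : -(2*(q:ℝ)*p*(μV-μW)) ≤ (r:ℝ)*ℓ*((q:ℝ)+p) + α*(2*(q:ℝ)*p - (r:ℝ)*((q:ℝ)+p)) := by
      ring_nf at h' ⊢
      linarith
    have := aux_lpb (q:ℝ) (p:ℝ) hb hab (μV-μW) α ℓ hℓ (r:ℝ) hrR (hmin ▸ hrm') h''
    rw [hmax, habs]
    constructor
    · intro hδ
      have c1 := this.1 hδ
      have : -(2*(q:ℝ)/((p:ℝ)-q))*(μV-μW) - (((q:ℝ)+p)/((p:ℝ)-q))*ℓ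
          = -(2*(q:ℝ)/((p:ℝ)-q))*(μV-μW) - (((p:ℝ)+q)/((p:ℝ)-q))*ℓ := by ring_nf
      linarith [c1]
    · exact this.2
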